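/- Euler's identity: ∏_{m=1}^{∞} (1 + q^{2m-1}) = 1 + ∑_{l=1}^{∞} q^{l^2} / ∏_{j=1}^{l} (1 - q^{2j}) holds as formal power series in q. -/

import Mathlib

open PowerSeries Finset

/-- Gaussian binomial coefficient (in `q²`) as a power series over `ℚ`,
defined via the `q`-Pascal recurrence. -/
noncomputable def eulerG : ℕ → ℕ → PowerSeries ℚ
  | 0, 0 => 1
  | 0, _+1 => 0
  | _+1, 0 => 1
  | N+1, l+1 => eulerG N (l+1) + X ^ (2*(N-l)) * eulerG N l

lemma eulerG_zero_right (N : ℕ) : eulerG N 0 = 1 := by cases N <;> rfl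

lemma eulerG_eq_zero : ∀ N l, N < l → eulerG N l = 0 := by
  intro N
  induction N with
  | zero => intro l hl; match l, hl with | l+1, _ => rfl
  | succ N ih =>
    intro l hl
    match l, hl with
    | l+1, hl => rw [eulerG, ih (l+1) (by omega), ih l (by omega)]; ring

/-- Finite q-binomial theorem, as polynomials in `x` over `ℚ⟦q⟧`. -/
lemma eulerA (N : ℕ) :
    ∏ m ∈ range N, (1 + Polynomial.C ((X : PowerSeries ℚ) ^ (2*m+1)) * Polynomial.X) =
    ∑ l ∈ range (N+1), Polynomial.C (eulerG N l * (X : PowerSeries ℚ) ^ (l^2)) * Polynomial.X ^ l := by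
  induction N with
  | zero => simp [eulerG]
  | succ N ih =>
    rw [Finset.prod_range_succ, ih, mul_add, mul_one]
    have key : ∑ l ∈ range (N+1+1),
        Polynomial.C (eulerG (N+1) l * (X : PowerSeries ℚ) ^ (l^2)) * Polynomial.X ^ l =
        (∑ l ∈ range (N+1+1), Polynomial.C (eulerG N l * (X : PowerSeries ℚ) ^ (l^2)) * Polynomial.X ^ l)
        + ∑ l ∈ range (N+1+1),
            Polynomial.C ((match l with
              | 0 => 0
              | l+1 => X ^ (2*(N-l)) * eulerG N l) * (X : PowerSeries ℚ) ^ (l^2)) * Polynomial.X ^ l := by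
      rw [← Finset.sum_add_distrib]
      refine Finset.sum_congr rfl fun l _ => ?_
      match l with
      | 0 => simp [eulerG_zero_right]
      | l+1 =>
        rw [eulerG]
        rw [← add_mul, ← Polynomial.C_add, ← add_mul]
    rw [key]
    congr 1
    · rw [Finset.sum_range_succ _ (N+1), eulerG_eq_zero N (N+1) (by omega)]
      simp
    · rw [Finset.sum_range_succ' _ (N+1)]
      have h0 : (Polynomial.C ((0 : PowerSeries ℚ) * (X : PowerSeries ℚ)^(0^2)) * Polynomial.X ^ 0) = 0 := by
        simp
      rw [Finset.sum_mul]
      refine Eq.trans (Finset.sum_congr rfl fun l hl => ?_) (by rw [h0, add_zero])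
      simp only [Finset.mem_range] at hl
      have hle : l ≤ N := by omega
      have h : l^2 + (2*N+1) = 2*(N-l) + (l+1)^2 := by
        obtain ⟨k, rfl⟩ := Nat.exists_eq_add_of_le hle
        simp only [Nat.add_sub_cancel_left]
        ring
      have e1 : (X : PowerSeries ℚ)^(l^2) * X^(2*N+1) = X^(2*(N-l)) * X^((l+1)^2) := by
        rw [← pow_add, ← pow_add, h]
      have e2 : eulerG N l * (X : PowerSeries ℚ)^(l^2) * X^(2*N+1)
          = X^(2*(N-l)) * eulerG N l * X^((l+1)^2) := by
        rw [mul_assoc, e1]; ring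
      calc Polynomial.C (eulerG N l * (X : PowerSeries ℚ)^(l^2)) * Polynomial.X ^ l *
            (Polynomial.C ((X : PowerSeries ℚ)^(2*N+1)) * Polynomial.X)
          = Polynomial.C (eulerG N l * (X : PowerSeries ℚ)^(l^2) * X^(2*N+1)) * Polynomial.X ^ (l+1) := by
            simp only [Polynomial.C_mul, pow_succ]
            ring
        _ = Polynomial.C ((X : PowerSeries ℚ)^(2*(N-l)) * eulerG N l * X^((l+1)^2)) * Polynomial.X ^ (l+1) := by
            rw [e2]

/-- Product formula for the Gaussian binomials. -/
lemma eulerB : ∀ N l k, l + k = N →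
    eulerG N l * ∏ j ∈ range l, (1 - (X : PowerSeries ℚ)^(2*(j+1))) =
    ∏ j ∈ range l, (1 - (X : PowerSeries ℚ)^(2*(k+j+1))) := by
  intro N
  induction N with
  | zero =>
    intro l k hlk
    obtain ⟨rfl, rfl⟩ : l = 0 ∧ k = 0 := by omega
    simp [eulerG]
  | succ N ih =>
    intro l k hlk
    match l with
    | 0 => simp [eulerG_zero_right]
    | l+1 =>
      have hNk : N - l = k := by omega
      rw [eulerG, hNk, add_mul]
      have claim1 : eulerG N (l+1) * ∏ j ∈ range (l+1), (1 - (X : PowerSeries ℚ)^(2*(j+1))) =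
          (∏ j ∈ range l, (1 - (X : PowerSeries ℚ)^(2*(k+j+1)))) * (1 - X^(2*k)) := by
        match k with
        | 0 =>
          rw [eulerG_eq_zero N (l+1) (by omega)]
          simp
        | k+1 =>
          rw [ih (l+1) k (by omega), Finset.prod_range_succ']
          congr 1
          refine Finset.prod_congr rfl fun j _ => ?_
          congr 2
          ring
      rw [claim1, Finset.prod_range_succ _ l, Finset.prod_range_succ
        (fun j => (1 - (X : PowerSeries ℚ)^(2*(k+j+1)))) l]
      have ih2 := ih l k (by omega)
      have e : (X : PowerSeries ℚ)^(2*k) * X^(2*(l+1)) = X^(2*(k+l+1)) := by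
        rw [← pow_add]; ring_nf
      linear_combination (X^(2*k) * (1 - (X : PowerSeries ℚ)^(2*(l+1)))) * ih2
        - (∏ j ∈ range l, (1 - (X : PowerSeries ℚ)^(2*(k+j+1)))) * e

lemma eulerD_unit (l : ℕ) :
    (∏ j ∈ range l, (1 - (X : PowerSeries ℚ)^(2*(j+1)))) *
      (∏ j ∈ range l, (1 - (X : PowerSeries ℚ)^(2*(j+1))))⁻¹ = 1 := by
  apply PowerSeries.mul_inv_cancel
  simp

lemma eulerKey (l k n : ℕ) (hn : n < l^2 + 2*(k+1)) :
    coeff (R := ℚ) n ((X : PowerSeries ℚ)^(l^2) * eulerG (l+k) l) =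
    coeff (R := ℚ) n ((X : PowerSeries ℚ)^(l^2) *
      (∏ j ∈ range l, (1 - (X : PowerSeries ℚ)^(2*(j+1))))⁻¹) := by
  set D := ∏ j ∈ range l, (1 - (X : PowerSeries ℚ)^(2*(j+1))) with hD
  set P := ∏ j ∈ range l, (1 - (X : PowerSeries ℚ)^(2*(k+j+1))) with hP
  have hB := eulerB (l+k) l k rfl
  have hg : eulerG (l+k) l = P * D⁻¹ := by
    calc eulerG (l+k) l = eulerG (l+k) l * (D * D⁻¹) := by rw [eulerD_unit, mul_one]
      _ = (eulerG (l+k) l * D) * D⁻¹ := by ring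
      _ = P * D⁻¹ := by rw [hB]
  have hdvd : (X : PowerSeries ℚ)^(2*(k+1)) ∣ P - 1 := by
    rw [hP]
    refine Finset.prod_induction _ (fun z => (X : PowerSeries ℚ)^(2*(k+1)) ∣ z - 1) ?_ (by simp) ?_
    · intro a b ha hb
      have : a * b - 1 = a * (b - 1) + (a - 1) := by ring
      rw [this]
      exact dvd_add (Dvd.dvd.mul_left hb a) ha
    · intro j _
      have : (1 : PowerSeries ℚ) - X^(2*(k+j+1)) - 1 = -(X^(2*(k+j+1))) := by ring
      rw [this]
      exact (pow_dvd_pow _ (by omega)).neg_right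
  have hsub : (X : PowerSeries ℚ)^(l^2 + 2*(k+1)) ∣
      X^(l^2) * eulerG (l+k) l - X^(l^2) * D⁻¹ := by
    rw [hg, pow_add]
    have : (X : PowerSeries ℚ)^(l^2) * (P * D⁻¹) - X^(l^2) * D⁻¹
        = (X^(l^2) * D⁻¹) * (P - 1) := by ring
    rw [this]
    exact mul_dvd_mul (dvd_mul_right _ _) hdvd
  have h0 := PowerSeries.X_pow_dvd_iff.mp hsub n hn
  rw [map_sub] at h0
  linarith

/-- The q-binomial theorem evaluated at `x = 1`. -/
lemma eulerA1 (N : ℕ) :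
    ∏ m ∈ range N, (1 + (X : PowerSeries ℚ) ^ (2*m+1)) =
    ∑ l ∈ range (N+1), eulerG N l * (X : PowerSeries ℚ) ^ (l^2) := by
  have := congrArg (Polynomial.eval (1 : PowerSeries ℚ)) (eulerA N)
  simpa [Polynomial.eval_prod, Polynomial.eval_finset_sum] using this

/-- Euler's identity:
`∏_{m=1}^∞ (1 + q^{2m-1}) = 1 + ∑_{l=1}^∞ q^{l²} / ∏_{j=1}^{l} (1-q^{2j})`,
stated coefficientwise (truncating the product and the sum, which does not affect
the coefficient of `q^n`). -/
theorem euler_identity :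
    ∀ n : ℕ,
      (PowerSeries.coeff (R := ℚ) n) (∏ m ∈ Finset.range (n + 1), (1 + (X : PowerSeries ℚ) ^ (2 * m + 1))) =
      (PowerSeries.coeff (R := ℚ) n) (1 + ∑ l ∈ Finset.range (n + 1),
        ((X : PowerSeries ℚ) ^ ((l + 1) ^ 2) *
          (∏ j ∈ Finset.range (l + 1), (1 - (X : PowerSeries ℚ) ^ (2 * (j + 1))))⁻¹)) := by
  intro n
  rw [eulerA1 (n+1)]
  have hRHS : (1 : PowerSeries ℚ) + ∑ l ∈ Finset.range (n + 1),
      ((X : PowerSeries ℚ) ^ ((l + 1) ^ 2) *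
        (∏ j ∈ Finset.range (l + 1), (1 - (X : PowerSeries ℚ) ^ (2 * (j + 1))))⁻¹) =
      ∑ l ∈ Finset.range (n + 2),
        ((X : PowerSeries ℚ) ^ (l ^ 2) *
          (∏ j ∈ Finset.range l, (1 - (X : PowerSeries ℚ) ^ (2 * (j + 1))))⁻¹) := by
    rw [Finset.sum_range_succ' (fun l => (X : PowerSeries ℚ) ^ (l ^ 2) *
          (∏ j ∈ Finset.range l, (1 - (X : PowerSeries ℚ) ^ (2 * (j + 1))))⁻¹) (n+1)]
    simp [add_comm]
  rw [hRHS, map_sum, map_sum]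
  refine Finset.sum_congr rfl fun l hl => ?_
  simp only [Finset.mem_range] at hl
  obtain ⟨k, hk⟩ : ∃ k, l + k = n + 1 := ⟨n + 1 - l, by omega⟩
  have hn : n < l ^ 2 + 2 * (k + 1) := by
    have hll : l ≤ l ^ 2 := Nat.le_self_pow two_ne_zero l
    omega
  rw [mul_comm (eulerG (n+1) l) _, ← hk]
  exact eulerKey l k n hn
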